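/- Let N be a positive integer and A a nonempty finite subset of ℤ_N. Define the Fourier bias ‖A‖_U = sup over nonzero ξ ∈ ℤ_N of |(1/N) · Σ_{a ∈ A} exp(-2πi·a·ξ/N)|, and the additive energy E(A,A) = #{(a,b,a',b') ∈ A×A×A×A : a + b = a' + b' in ℤ_N}. Then ‖A‖_U^4 ≤ E(A,A)/N³ − (|A|/N)⁴. -/

import Mathlib

/-- Fourier bias of a finite subset `A` of `ℤ_N`:
`‖A‖_U = sup_{ξ ≠ 0} |(1/N) ∑_{a ∈ A} exp(-2πi a ξ / N)|`. -/
noncomputable def fourierBias (N : ℕ) (A : Finset (ZMod N)) : ℝ :=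
  ⨆ ξ : {ξ : ZMod N // ξ ≠ 0},
    ‖(N : ℂ)⁻¹ * ∑ a ∈ A,
      Complex.exp (-(2 * (Real.pi : ℂ) * Complex.I * ((a.val * ξ.1.val : ℕ) : ℂ) / (N : ℂ)))‖

/-- Additive energy `E(A,A) = #{(a,b,a',b') ∈ A⁴ : a + b = a' + b'}`. -/
def addEnergy (N : ℕ) (A : Finset (ZMod N)) : ℕ :=
  ((A ×ˢ A ×ˢ A ×ˢ A).filter
    (fun x => x.1 + x.2.1 = x.2.2.1 + x.2.2.2)).card

open Complex Finset

private lemma orth {N : ℕ} [NeZero N] (c : ZMod N) :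
    ∑ ξ : ZMod N, ZMod.stdAddChar (c * ξ) = if c = 0 then (N : ℂ) else 0 := by
  classical
  have h : ∑ ξ : ZMod N, ZMod.stdAddChar (c * ξ)
      = ∑ ξ : ZMod N, (AddChar.mulShift ZMod.stdAddChar c) ξ := by
    simp
  rw [h, AddChar.sum_eq_ite]
  by_cases hc : c = 0
  · subst hc
    rw [AddChar.mulShift_zero, if_pos rfl, if_pos ?_, ZMod.card]
    rfl
  · have hp := ZMod.isPrimitive_stdAddChar N hc
    rw [if_neg hc, if_neg ?_]
    intro h0
    exact hp (h0.trans (DFunLike.ext _ _ fun a => by simp))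

private lemma conj_std {N : ℕ} [NeZero N] (x : ZMod N) :
    (starRingEnd ℂ) (ZMod.stdAddChar x) = ZMod.stdAddChar (-x) := by
  rw [ZMod.stdAddChar_apply, ZMod.stdAddChar_apply, AddChar.map_neg_eq_inv,
    ← Circle.coe_inv_eq_conj, Circle.coe_inv]

private lemma expand_pow {N : ℕ} [NeZero N] (A : Finset (ZMod N)) (ξ : ZMod N) :
    ((∑ a ∈ A, ZMod.stdAddChar (a * ξ)) *
      (starRingEnd ℂ) (∑ a ∈ A, ZMod.stdAddChar (a * ξ))) ^ 2
    = ∑ x ∈ A ×ˢ A ×ˢ A ×ˢ A,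
        ZMod.stdAddChar ((x.1 + x.2.1 - (x.2.2.1 + x.2.2.2)) * ξ) := by
  have hconj : (starRingEnd ℂ) (∑ a ∈ A, ZMod.stdAddChar (a * ξ))
      = ∑ a ∈ A, ZMod.stdAddChar (-(a * ξ)) := by
    rw [map_sum]
    exact sum_congr rfl fun a _ => conj_std _
  rw [hconj]
  set S := ∑ a ∈ A, ZMod.stdAddChar (a * ξ) with hS
  set T := ∑ a ∈ A, ZMod.stdAddChar (-(a * ξ)) with hT
  calc (S * T) ^ 2 = (S * S) * (T * T) := by ring
    _ = (∑ a ∈ A, ∑ b ∈ A, ZMod.stdAddChar (a * ξ) * ZMod.stdAddChar (b * ξ)) *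
        (∑ c ∈ A, ∑ d ∈ A, ZMod.stdAddChar (-(c * ξ)) * ZMod.stdAddChar (-(d * ξ))) := by
          rw [hS, hT, Finset.sum_mul_sum, Finset.sum_mul_sum]
    _ = ∑ a ∈ A, ∑ c ∈ A, ∑ b ∈ A, ∑ d ∈ A,
          (ZMod.stdAddChar (a * ξ) * ZMod.stdAddChar (b * ξ)) *
          (ZMod.stdAddChar (-(c * ξ)) * ZMod.stdAddChar (-(d * ξ))) := by
          rw [Finset.sum_mul_sum]
          exact sum_congr rfl fun a _ => sum_congr rfl fun c _ => Finset.sum_mul_sum _ _ _ _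
    _ = ∑ a ∈ A, ∑ b ∈ A, ∑ c ∈ A, ∑ d ∈ A,
          (ZMod.stdAddChar (a * ξ) * ZMod.stdAddChar (b * ξ)) *
          (ZMod.stdAddChar (-(c * ξ)) * ZMod.stdAddChar (-(d * ξ))) := by
          exact sum_congr rfl fun a _ => Finset.sum_comm
    _ = ∑ a ∈ A, ∑ b ∈ A, ∑ c ∈ A, ∑ d ∈ A,
          ZMod.stdAddChar ((a + b - (c + d)) * ξ) := by
          refine sum_congr rfl fun a _ => sum_congr rfl fun b _ =>
            sum_congr rfl fun c _ => sum_congr rfl fun d _ => ?_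
          have h : (a + b - (c + d)) * ξ = a * ξ + b * ξ + (-(c * ξ) + -(d * ξ)) := by ring
          rw [h, AddChar.map_add_eq_mul, AddChar.map_add_eq_mul, AddChar.map_add_eq_mul]
    _ = ∑ x ∈ A ×ˢ A ×ˢ A ×ˢ A,
          ZMod.stdAddChar ((x.1 + x.2.1 - (x.2.2.1 + x.2.2.2)) * ξ) := by
          simp only [Finset.sum_product]

private lemma parseval {N : ℕ} [NeZero N] (A : Finset (ZMod N)) :
    ∑ ξ : ZMod N, (‖∑ a ∈ A, ZMod.stdAddChar (a * ξ)‖) ^ 4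
      = (N : ℝ) * _root_.addEnergy N A := by
  classical
  apply Complex.ofReal_injective
  push_cast
  have h1 : ∀ ξ : ZMod N, ((‖∑ a ∈ A, ZMod.stdAddChar (a * ξ)‖) ^ 4 : ℂ)
      = ((∑ a ∈ A, ZMod.stdAddChar (a * ξ)) *
        (starRingEnd ℂ) (∑ a ∈ A, ZMod.stdAddChar (a * ξ))) ^ 2 := by
    intro ξ
    rw [Complex.mul_conj]
    norm_cast
    rw [← Complex.sq_norm]
    ring
  calc ∑ ξ : ZMod N, ((‖∑ a ∈ A, ZMod.stdAddChar (a * ξ)‖) ^ 4 : ℂ)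
      = ∑ ξ : ZMod N, ∑ x ∈ A ×ˢ A ×ˢ A ×ˢ A,
          ZMod.stdAddChar ((x.1 + x.2.1 - (x.2.2.1 + x.2.2.2)) * ξ) := by
        exact sum_congr rfl fun ξ _ => (h1 ξ).trans (expand_pow A ξ)
    _ = ∑ x ∈ A ×ˢ A ×ˢ A ×ˢ A, ∑ ξ : ZMod N,
          ZMod.stdAddChar ((x.1 + x.2.1 - (x.2.2.1 + x.2.2.2)) * ξ) := Finset.sum_comm
    _ = ∑ x ∈ A ×ˢ A ×ˢ A ×ˢ A,
          if x.1 + x.2.1 = x.2.2.1 + x.2.2.2 then (N : ℂ) else 0 := by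
        refine sum_congr rfl fun x _ => ?_
        rw [orth]
        simp [sub_eq_zero]
    _ = (N : ℂ) * _root_.addEnergy N A := by
        rw [Finset.sum_ite, Finset.sum_const, Finset.sum_const, smul_zero, add_zero,
          nsmul_eq_mul, _root_.addEnergy, mul_comm]

private lemma exp_eq_std {N : ℕ} [NeZero N] (a ξ : ZMod N) :
    Complex.exp (-(2 * (Real.pi : ℂ) * Complex.I * ((a.val * ξ.val : ℕ) : ℂ) / (N : ℂ)))
      = ZMod.stdAddChar (a * (-ξ)) := by
  have h : a * (-ξ) = ((-(a.val * ξ.val : ℕ) : ℤ) : ZMod N) := by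
    push_cast
    rw [ZMod.natCast_val, ZMod.natCast_val, ZMod.cast_id, ZMod.cast_id]
    ring
  rw [h, ZMod.stdAddChar_coe]
  push_cast
  ring_nf

/-- `‖A‖_U⁴ ≤ E(A,A)/N³ − (|A|/N)⁴`. -/
theorem fourierBias_pow_four_le (N : ℕ) (hN : 0 < N) (A : Finset (ZMod N))
    (hA : A.Nonempty) :
    fourierBias N A ^ 4 ≤ (addEnergy N A : ℝ) / (N : ℝ) ^ 3 - ((A.card : ℝ) / N) ^ 4 := by
  classical
  rcases eq_or_lt_of_le (Nat.one_le_iff_ne_zero.mpr hN.ne') with h1 | h1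
  · -- N = 1
    have hN1 : N = 1 := h1.symm
    subst hN1
    have hAcard : A.card = 1 := le_antisymm
      (le_trans (Finset.card_le_univ A) (by simp)) hA.card_pos
    have hE : _root_.addEnergy 1 A = 1 := by
      have : (A ×ˢ A ×ˢ A ×ˢ A).filter
          (fun x : ZMod 1 × ZMod 1 × ZMod 1 × ZMod 1 =>
            x.1 + x.2.1 = x.2.2.1 + x.2.2.2) = A ×ˢ A ×ˢ A ×ˢ A := by
        refine Finset.filter_true_of_mem fun x _ => Subsingleton.elim _ _
      rw [_root_.addEnergy, this]
      simp [Finset.card_product, hAcard]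
    have hbias : fourierBias 1 A = 0 := by
      have : IsEmpty {ξ : ZMod 1 // ξ ≠ 0} := by
        refine ⟨fun ξ => ξ.2 (Subsingleton.elim _ _)⟩
      rw [fourierBias]
      exact Real.iSup_of_isEmpty _
    rw [hbias, hE, hAcard]
    norm_num
  · -- N ≥ 2
    haveI : NeZero N := ⟨hN.ne'⟩
    haveI : Fact (1 < N) := ⟨h1⟩
    haveI : Nonempty {ξ : ZMod N // ξ ≠ 0} := ⟨⟨1, one_ne_zero⟩⟩
    set g : {ξ : ZMod N // ξ ≠ 0} → ℝ := fun ξ =>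
      ‖(N : ℂ)⁻¹ * ∑ a ∈ A,
        Complex.exp (-(2 * (Real.pi : ℂ) * Complex.I * ((a.val * ξ.1.val : ℕ) : ℂ) / (N : ℂ)))‖
      with hg
    obtain ⟨ξ0, hξ0⟩ := exists_eq_ciSup_of_finite (f := g)
    have hfb : fourierBias N A = g ξ0 := hξ0.symm
    have hNpos : (0 : ℝ) < N := by exact_mod_cast hN
    -- rewrite g ξ0
    have hg0 : g ξ0 = ‖∑ a ∈ A, ZMod.stdAddChar (a * (-ξ0.1))‖ / N := by
      rw [hg]
      simp only
      rw [norm_mul]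
      have : ∀ a ∈ A, Complex.exp (-(2 * (Real.pi : ℂ) * Complex.I *
          ((a.val * ξ0.1.val : ℕ) : ℂ) / (N : ℂ))) = ZMod.stdAddChar (a * (-ξ0.1)) :=
        fun a _ => exp_eq_std a ξ0.1
      rw [Finset.sum_congr rfl this]
      rw [norm_inv, Complex.norm_natCast]
      rw [div_eq_inv_mul]
    -- key inequality
    have hη : (-ξ0.1 : ZMod N) ≠ 0 := neg_ne_zero.mpr ξ0.2
    set η := (-ξ0.1 : ZMod N)
    have hF0 : ‖∑ a ∈ A, ZMod.stdAddChar (a * (0 : ZMod N))‖ = A.card := by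
      simp
    have hkey : (‖∑ a ∈ A, ZMod.stdAddChar (a * η)‖) ^ 4 + (A.card : ℝ) ^ 4
        ≤ (N : ℝ) * _root_.addEnergy N A := by
      rw [← parseval A]
      have hsub : ({η, 0} : Finset (ZMod N)) ⊆ Finset.univ := Finset.subset_univ _
      have hpair : ∑ ξ ∈ ({η, 0} : Finset (ZMod N)),
          (‖∑ a ∈ A, ZMod.stdAddChar (a * ξ)‖) ^ 4
          = (‖∑ a ∈ A, ZMod.stdAddChar (a * η)‖) ^ 4 + (A.card : ℝ) ^ 4 := by
        rw [Finset.sum_pair hη, hF0]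
      rw [← hpair]
      refine Finset.sum_le_sum_of_subset_of_nonneg hsub fun ξ _ _ => ?_
      positivity
    have hcard4 : (0:ℝ) ≤ (A.card : ℝ) ^ 4 := by positivity
    have hrhs : (_root_.addEnergy N A : ℝ) / (N : ℝ) ^ 3 - ((A.card : ℝ) / N) ^ 4
        = ((N : ℝ) * _root_.addEnergy N A - (A.card : ℝ) ^ 4) / (N : ℝ) ^ 4 := by
      field_simp
    rw [hfb, hg0, div_pow, hrhs]
    exact (div_le_div_iff_of_pos_right (by positivity)).mpr (by linarith [hkey])
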